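/- Let K be an arc in PG(3,5) of cardinality 104 such that K(H) ≤ 22 for every hyperplane (plane) H and K(H0) = 22 for some hyperplane H0 (i.e. a (104,22)-arc). Then: (a) for every hyperplane H and every line L contained in H, 5·K(L) ≤ 6 + K(H); (b) K(P) ≤ 1 for every point P, K(L) ≤ 5 for every line L, and there exist a point of multiplicity 1 and a line of multiplicity 5; (c) there is no hyperplane H with K(H) ∈ {2, 3, 7, 8, 12, 13, 17, 18}. -/

import Mathlib

open Module

instance : Fact (Nat.Prime 5) := ⟨by norm_num⟩

/-- The set of subspaces of the vector space `(F_5)^4` of (algebraic) dimension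
`k`; for `k = 1` these are the points of `PG(3,5)`, for `k = 2` the lines and
for `k = 3` the hyperplanes (planes). -/
abbrev PSub (F : Type*) [Field F] (v k : ℕ) :=
  {S : Submodule F (Fin v → F) // Module.finrank F S = k}

/-- The multiplicity `K(S)` of a subspace `S` with respect to the arc `K`. -/
noncomputable def pmult {F : Type*} [Field F] {v : ℕ}
    (K : PSub F v 1 → ℕ) (S : Submodule F (Fin v → F)) : ℕ :=
  ∑ᶠ (P : PSub F v 1) (_ : P.1 ≤ S), K P

/-- The cardinality `#K` of the arc `K`. -/
noncomputable def pcard {F : Type*} [Field F] {v : ℕ} (K : PSub F v 1 → ℕ) : ℕ :=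
  ∑ᶠ P : PSub F v 1, K P

open scoped Classical
open Finset

namespace PG

abbrev F5 := ZMod 5
abbrev V := Fin 4 → ZMod 5

noncomputable instance : Fintype (Submodule F5 V) := Fintype.ofFinite _

/-- subspaces of rank `k` inside `T` and containing `S`. -/
noncomputable def subTh (k : ℕ) (S T : Submodule F5 V) : Finset (Submodule F5 V) :=
  univ.filter (fun U => finrank F5 U = k ∧ S ≤ U ∧ U ≤ T)

lemma mem_subTh {k} {S T U : Submodule F5 V} :
    U ∈ subTh k S T ↔ finrank F5 U = k ∧ S ≤ U ∧ U ≤ T := by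
  simp [subTh]

lemma rank_sup_point {S p : Submodule F5 V} (hp : finrank F5 p = 1) (hps : ¬ p ≤ S) :
    finrank F5 ↥(S ⊔ p) = finrank F5 S + 1 := by
  have h := Submodule.finrank_sup_add_finrank_inf_eq S p
  have h2 : finrank F5 ↥(S ⊓ p) = 0 := by
    have hlt : S ⊓ p < p := lt_of_le_of_ne inf_le_right (by
      intro he
      exact hps (he ▸ inf_le_left))
    have := Submodule.finrank_lt_finrank_of_lt hlt
    omega
  omega

lemma card_subTh {S T : Submodule F5 V} (hST : S ≤ T) {k : ℕ} (hS : finrank F5 S = k) :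
    (subTh (k+1) S T).card * (4 * 5 ^ k) + 5 ^ k = 5 ^ (finrank F5 T) := by
  -- the set of vectors in T but not in S
  set D : Finset V := univ.filter (fun v => v ∈ T ∧ v ∉ S) with hD
  have cardSub : ∀ (W : Submodule F5 V), (univ.filter (fun v => v ∈ W)).card
      = 5 ^ (finrank F5 W) := by
    intro W
    rw [← Fintype.card_subtype]
    rw [card_eq_pow_finrank (K := F5), ZMod.card]
  have cardDiff : ∀ (S' W : Submodule F5 V), S' ≤ W →
      (univ.filter (fun v => v ∈ W ∧ v ∉ S')).card = 5 ^ finrank F5 W - 5 ^ finrank F5 S' := by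
    intro S' W hSW
    have : univ.filter (fun v : V => v ∈ W ∧ v ∉ S')
        = univ.filter (fun v => v ∈ W) \ univ.filter (fun v => v ∈ S') := by
      ext v; simp only [mem_filter, mem_sdiff, mem_univ, true_and]
    rw [this, card_sdiff_of_subset (by intro v hv; simp only [mem_filter, mem_univ, true_and] at *; exact hSW hv), cardSub, cardSub]
  have hDcard : D.card = 5 ^ (finrank F5 T) - 5 ^ k := by
    rw [hD, cardDiff S T hST, hS]
  -- fiber map
  have key : D.card = ∑ U ∈ subTh (k+1) S T, (D.filter (fun v => S ⊔ (F5 ∙ v) = U)).card := by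
    apply card_eq_sum_card_fiberwise
    intro v hv
    simp only [hD, mem_coe, mem_filter, mem_univ, true_and] at hv
    have hvS : ¬ (F5 ∙ v) ≤ S := by
      intro h; exact hv.2 (h (Submodule.mem_span_singleton_self v))
    have hv0 : v ≠ 0 := by rintro rfl; exact hv.2 (Submodule.zero_mem S)
    simp only [Finset.mem_coe]; rw [mem_subTh]
    refine ⟨?_, le_sup_left, sup_le hST (by
      rw [Submodule.span_singleton_le_iff_mem]; exact hv.1)⟩
    rw [rank_sup_point (finrank_span_singleton hv0) hvS, hS]
  have fiber : ∀ U ∈ subTh (k+1) S T,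
      (D.filter (fun v => S ⊔ (F5 ∙ v) = U)).card = 5 ^ (k+1) - 5 ^ k := by
    intro U hU
    rw [mem_subTh] at hU
    obtain ⟨hUr, hSU, hUT⟩ := hU
    have : D.filter (fun v => S ⊔ (F5 ∙ v) = U) = univ.filter (fun v => v ∈ U ∧ v ∉ S) := by
      ext v
      simp only [hD, mem_filter, mem_univ, true_and, and_imp]
      constructor
      · rintro ⟨⟨hvT, hvS⟩, rfl⟩
        exact ⟨(le_sup_right : (F5 ∙ v) ≤ S ⊔ _) (Submodule.mem_span_singleton_self v), hvS⟩
      · rintro ⟨hvU, hvS⟩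
        have hv0 : v ≠ 0 := by rintro rfl; exact hvS (Submodule.zero_mem S)
        have hle : S ⊔ (F5 ∙ v) ≤ U := sup_le hSU
          (by rw [Submodule.span_singleton_le_iff_mem]; exact hvU)
        have hr : finrank F5 ↥(S ⊔ (F5 ∙ v)) = k + 1 := by
          rw [rank_sup_point (finrank_span_singleton hv0)
            (fun h => hvS (h (Submodule.mem_span_singleton_self v))), hS]
        exact ⟨⟨hUT hvU, hvS⟩, Submodule.eq_of_le_of_finrank_le hle (by omega)⟩
    rw [this, cardDiff S U hSU, hS, hUr]
  have h5 : (5:ℕ) ^ (k+1) - 5 ^ k = 4 * 5 ^ k := by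
    rw [pow_succ]; omega
  rw [Finset.sum_congr rfl fiber, sum_const, smul_eq_mul, h5] at key
  rw [key] at hDcard
  have hST5 : 5 ^ k ≤ 5 ^ finrank F5 T := by
    apply Nat.pow_le_pow_right (by norm_num)
    rw [← hS]
    exact Submodule.finrank_mono hST
  omega

-- layer 2 (appended inside namespace PG)
lemma finrank_top4 : finrank F5 (⊤ : Submodule F5 V) = 4 := by
  rw [finrank_top]; exact Module.finrank_fin_fun F5

lemma card_pencil {L : Submodule F5 V} (hL : finrank F5 L = 2) :
    (subTh 3 L ⊤).card = 6 := by
  have := card_subTh (le_top (a := L)) hL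
  rw [finrank_top4] at this
  norm_num at this
  omega

lemma card_linesThru {P : Submodule F5 V} (hP : finrank F5 P = 1) :
    (subTh 2 P ⊤).card = 31 := by
  have := card_subTh (le_top (a := P)) hP
  rw [finrank_top4] at this
  norm_num at this
  omega

lemma card_linesThru_in {P W : Submodule F5 V} (hP : finrank F5 P = 1)
    (hW : finrank F5 W = 3) (hPW : P ≤ W) :
    (subTh 2 P W).card = 6 := by
  have := card_subTh hPW hP
  rw [hW] at this
  norm_num at this
  omega

lemma card_pts_line {L : Submodule F5 V} (hL : finrank F5 L = 2) :
    (subTh 1 ⊥ L).card = 6 := by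
  have := card_subTh (bot_le (a := L)) (finrank_bot F5 V)
  rw [hL] at this
  norm_num at this
  omega

lemma card_pts_plane {W : Submodule F5 V} (hW : finrank F5 W = 3) :
    (subTh 1 ⊥ W).card = 31 := by
  have := card_subTh (bot_le (a := W)) (finrank_bot F5 V)
  rw [hW] at this
  norm_num at this
  omega

lemma card_pts_top : (subTh 1 ⊥ (⊤ : Submodule F5 V)).card = 156 := by
  have := card_subTh (bot_le (a := (⊤ : Submodule F5 V))) (finrank_bot F5 V)
  rw [finrank_top4] at this
  norm_num at this
  omega

lemma swap_count {α β : Type*} (s : Finset α) (t : Finset β) (r : α → β → Prop) :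
    ∑ a ∈ s, (t.filter (fun b => r a b)).card = ∑ b ∈ t, (s.filter (fun a => r a b)).card := by
  simp_rw [card_filter]
  exact Finset.sum_comm

lemma card_lines_plane {W : Submodule F5 V} (hW : finrank F5 W = 3) :
    (subTh 2 ⊥ W).card = 31 := by
  have h := swap_count (subTh 2 ⊥ W) (subTh 1 ⊥ W) (fun L p => p ≤ L)
  have h1 : ∀ L ∈ subTh 2 ⊥ W, ((subTh 1 ⊥ W).filter (fun p => p ≤ L)).card = 6 := by
    intro L hL
    rw [mem_subTh] at hL
    have : (subTh 1 ⊥ W).filter (fun p => p ≤ L) = subTh 1 ⊥ L := by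
      ext p
      simp only [mem_filter, mem_subTh]
      exact ⟨fun h => ⟨h.1.1, bot_le, h.2⟩, fun h => ⟨⟨h.1, bot_le, h.2.2.trans hL.2.2⟩, h.2.2⟩⟩
    rw [this, card_pts_line hL.1]
  have h2 : ∀ p ∈ subTh 1 ⊥ W, ((subTh 2 ⊥ W).filter (fun L => p ≤ L)).card = 6 := by
    intro p hp
    rw [mem_subTh] at hp
    have : (subTh 2 ⊥ W).filter (fun L => p ≤ L) = subTh 2 p W := by
      ext L
      simp only [mem_filter, mem_subTh]
      exact ⟨fun h => ⟨h.1.1, h.2, h.1.2.2⟩, fun h => ⟨⟨h.1, bot_le, h.2.2⟩, h.2.1⟩⟩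
    rw [this, card_linesThru_in hp.1 hW hp.2.2]
  rw [Finset.sum_congr rfl h1, Finset.sum_congr rfl h2, sum_const, sum_const,
    card_pts_plane hW] at h
  simp only [smul_eq_mul] at h
  omega

/-! ### pmult as a Finset sum -/

noncomputable instance : Fintype (PSub F5 4 1) := Fintype.ofFinite _

lemma pmult_eq_sum_subtype (K : PSub F5 4 1 → ℕ) (S : Submodule F5 V) :
    pmult K S = ∑ P ∈ univ.filter (fun P : PSub F5 4 1 => P.1 ≤ S), K P := by
  apply finsum_cond_eq_sum_of_cond_iff
  intro P _
  simp

lemma pmult_point (K : PSub F5 4 1 → ℕ) (P : PSub F5 4 1) : pmult K P.1 = K P := by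
  rw [pmult_eq_sum_subtype]
  have : univ.filter (fun Q : PSub F5 4 1 => Q.1 ≤ P.1) = {P} := by
    ext Q
    simp only [mem_filter, mem_univ, true_and, mem_singleton]
    constructor
    · intro h
      exact Subtype.ext (Submodule.eq_of_le_of_finrank_le h (by rw [Q.2, P.2]))
    · rintro rfl; exact le_rfl
  rw [this, sum_singleton]

lemma pmult_eq_sum (K : PSub F5 4 1 → ℕ) (S : Submodule F5 V) :
    pmult K S = ∑ p ∈ subTh 1 ⊥ S, pmult K p := by
  rw [pmult_eq_sum_subtype]
  apply Finset.sum_bij (fun (P : PSub F5 4 1) _ => P.1)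
  · intro P hP
    simp only [mem_filter, mem_univ, true_and] at hP
    rw [mem_subTh]
    exact ⟨P.2, bot_le, hP⟩
  · intro P _ Q _ h
    exact Subtype.ext h
  · intro p hp
    rw [mem_subTh] at hp
    exact ⟨⟨p, hp.1⟩, by simp [hp.2.2], rfl⟩
  · intro P _
    rw [pmult_point]

lemma pcard_eq_sum (K : PSub F5 4 1 → ℕ) :
    pcard K = ∑ p ∈ subTh 1 ⊥ (⊤ : Submodule F5 V), pmult K p := by
  have : pcard K = pmult K ⊤ := by
    rw [pmult_eq_sum_subtype, pcard]
    rw [finsum_eq_sum_of_fintype]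
    apply Finset.sum_congr _ (fun _ _ => rfl)
    ext P; simp
  rw [this, pmult_eq_sum]

lemma pmult_mono (K : PSub F5 4 1 → ℕ) {S T : Submodule F5 V} (h : S ≤ T) :
    pmult K S ≤ pmult K T := by
  rw [pmult_eq_sum_subtype, pmult_eq_sum_subtype]
  apply Finset.sum_le_sum_of_subset
  intro P
  simp only [mem_filter, mem_univ, true_and]
  exact fun hP => hP.trans h

lemma pmult_top (K : PSub F5 4 1 → ℕ) : pcard K = pmult K (⊤ : Submodule F5 V) := by
  rw [pmult_eq_sum_subtype, pcard, finsum_eq_sum_of_fintype]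
  apply Finset.sum_congr _ (fun _ _ => rfl)
  ext P; simp

lemma filter_thru_singleton {S T p : Submodule F5 V} {k l : ℕ} (hl : l = k + 1)
    (hS : finrank F5 S = k)
    (hp : finrank F5 p = 1) (hST : S ≤ T) (hpT : p ≤ T) (hpS : ¬ p ≤ S) :
    (subTh l S T).filter (fun U => p ≤ U) = {S ⊔ p} := by
  subst hl
  ext U
  simp only [mem_filter, mem_subTh, mem_singleton]
  constructor
  · rintro ⟨⟨hU, hSU, hUT⟩, hpU⟩
    exact (Submodule.eq_of_le_of_finrank_le (sup_le hSU hpU)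
      (by rw [hU, rank_sup_point hp hpS, hS])).symm
  · rintro rfl
    exact ⟨⟨by rw [rank_sup_point hp hpS, hS], le_sup_left, sup_le hST hpT⟩, le_sup_right⟩

lemma subTh_one_eq_filter {U W : Submodule F5 V} (hUW : U ≤ W) :
    subTh 1 ⊥ U = (subTh 1 ⊥ W).filter (fun p => p ≤ U) := by
  ext p
  simp only [mem_filter, mem_subTh]
  exact ⟨fun h => ⟨⟨h.1, bot_le, h.2.2.trans hUW⟩, h.2.2⟩, fun h => ⟨h.1.1, bot_le, h.2⟩⟩

lemma sum_pmult_eq (K : PSub F5 4 1 → ℕ) (W : Submodule F5 V) (C : Finset (Submodule F5 V))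
    (hC : ∀ U ∈ C, U ≤ W) :
    ∑ U ∈ C, pmult K U
      = ∑ p ∈ subTh 1 ⊥ W, (C.filter (fun U => p ≤ U)).card * pmult K p := by
  have e1 : ∀ U ∈ C, pmult K U
      = ∑ p ∈ subTh 1 ⊥ W, if p ≤ U then pmult K p else 0 := by
    intro U hU
    rw [pmult_eq_sum, subTh_one_eq_filter (hC U hU), sum_filter]
  rw [Finset.sum_congr rfl e1, Finset.sum_comm]
  apply Finset.sum_congr rfl
  intro p _
  rw [← sum_filter, sum_const, smul_eq_mul]

lemma sum_thru (K : PSub F5 4 1 → ℕ) {S T : Submodule F5 V} {k c : ℕ}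
    (hS : finrank F5 S = k) (hST : S ≤ T)
    (hc : (subTh (k+1) S T).card = c) :
    ∑ U ∈ subTh (k+1) S T, pmult K U + pmult K S = pmult K T + c * pmult K S := by
  set C := subTh (k+1) S T with hCdef
  have hCsub : ∀ U ∈ C, U ≤ T := fun U hU => (mem_subTh.mp hU).2.2
  rw [sum_pmult_eq K T C hCsub]
  have hgoal : ∀ x y : ℕ, x + y = pmult K T →
      (x = c * pmult K S) → True := fun _ _ _ _ => trivial
  rw [← sum_filter_add_sum_filter_not (subTh 1 ⊥ T) (fun p => p ≤ S)]
  have e1 : ∀ p ∈ (subTh 1 ⊥ T).filter (fun p => p ≤ S),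
      (C.filter (fun U => p ≤ U)).card * pmult K p = c * pmult K p := by
    intro p hp
    simp only [mem_filter, mem_subTh] at hp
    have : C.filter (fun U => p ≤ U) = C := by
      apply filter_true_of_mem
      intro U hU
      exact hp.2.trans (mem_subTh.mp hU).2.1
    rw [this, hc]
  have e2 : ∀ p ∈ (subTh 1 ⊥ T).filter (fun p => ¬ p ≤ S),
      (C.filter (fun U => p ≤ U)).card * pmult K p = pmult K p := by
    intro p hp
    simp only [mem_filter, mem_subTh] at hp
    rw [hCdef, filter_thru_singleton rfl hS hp.1.1 hST hp.1.2.2 hp.2, card_singleton, one_mul]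
  rw [Finset.sum_congr rfl e1, Finset.sum_congr rfl e2, ← mul_sum]
  have ha : ∑ p ∈ (subTh 1 ⊥ T).filter (fun p => p ≤ S), pmult K p = pmult K S := by
    rw [← subTh_one_eq_filter hST, ← pmult_eq_sum]
  have hb : ∑ p ∈ (subTh 1 ⊥ T).filter (fun p => p ≤ S), pmult K p
      + ∑ p ∈ (subTh 1 ⊥ T).filter (fun p => ¬ p ≤ S), pmult K p = pmult K T := by
    rw [sum_filter_add_sum_filter_not, ← pmult_eq_sum]
  rw [ha]
  rw [ha] at hb
  have hg : ((subTh 1 ⊥ T).filter (fun p => ¬ p ≤ S)).sum (pmult K)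
      = ∑ p ∈ (subTh 1 ⊥ T).filter (fun p => ¬ p ≤ S), pmult K p := rfl
  omega

section Main
variable (K : PSub F5 4 1 → ℕ)

lemma sum_pencil {L : Submodule F5 V} (hL : finrank F5 L = 2) :
    ∑ H ∈ subTh 3 L ⊤, pmult K H + pmult K L = pcard K + 6 * pmult K L := by
  have h := sum_thru K hL le_top (card_pencil hL)
  rw [← pmult_top] at h
  exact h

lemma parta (hcard : pcard K = 104) (hle : ∀ H : PSub (ZMod 5) 4 3, pmult K H.1 ≤ 22)
    {W L : Submodule F5 V} (hW : finrank F5 W = 3) (hL2 : finrank F5 L = 2) (hLW : L ≤ W) :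
    5 * pmult K L ≤ 6 + pmult K W := by
  have hsum := sum_pencil K hL2
  have hWmem : W ∈ subTh 3 L ⊤ := mem_subTh.mpr ⟨hW, hLW, le_top⟩
  rw [← Finset.add_sum_erase _ _ hWmem] at hsum
  have hb : ∑ H ∈ (subTh 3 L ⊤).erase W, pmult K H ≤ 5 * 22 := by
    have hcount : ((subTh 3 L ⊤).erase W).card = 5 := by
      rw [card_erase_of_mem hWmem, card_pencil hL2]
    calc ∑ H ∈ (subTh 3 L ⊤).erase W, pmult K H
        ≤ ∑ _H ∈ (subTh 3 L ⊤).erase W, 22 :=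
          sum_le_sum fun H hH => hle ⟨H, (mem_subTh.mp (mem_of_mem_erase hH)).1⟩
      _ = 5 * 22 := by rw [sum_const, smul_eq_mul, hcount]
  rw [hcard] at hsum
  omega

lemma line_le5 (hcard : pcard K = 104) (hle : ∀ H : PSub (ZMod 5) 4 3, pmult K H.1 ≤ 22)
    {L : Submodule F5 V} (hL2 : finrank F5 L = 2) : pmult K L ≤ 5 := by
  have hsum := sum_pencil K hL2
  have hb : ∑ H ∈ subTh 3 L ⊤, pmult K H ≤ 6 * 22 := by
    calc ∑ H ∈ subTh 3 L ⊤, pmult K H ≤ ∑ _H ∈ subTh 3 L ⊤, 22 :=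
          sum_le_sum fun H hH => hle ⟨H, (mem_subTh.mp hH).1⟩
      _ = 6 * 22 := by rw [sum_const, smul_eq_mul, card_pencil hL2]
  rw [hcard] at hsum
  omega

lemma point_le1 (hcard : pcard K = 104) (hle : ∀ H : PSub (ZMod 5) 4 3, pmult K H.1 ≤ 22)
    {p : Submodule F5 V} (hp : finrank F5 p = 1) : pmult K p ≤ 1 := by
  have h0 := sum_thru K hp le_top (card_linesThru hp)
  rw [← pmult_top, hcard] at h0
  have h : ∑ U ∈ subTh 2 p ⊤, pmult K U + pmult K p = 104 + 31 * pmult K p := h0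
  have hb : ∑ U ∈ subTh 2 p ⊤, pmult K U ≤ 31 * 5 := by
    calc ∑ U ∈ subTh 2 p ⊤, pmult K U ≤ ∑ _U ∈ subTh 2 p ⊤, 5 :=
          sum_le_sum fun U hU => line_le5 K hcard hle (mem_subTh.mp hU).1
      _ = 31 * 5 := by rw [sum_const, smul_eq_mul, card_linesThru hp]
  omega

lemma ex_point (hcard : pcard K = 104) (hle : ∀ H : PSub (ZMod 5) 4 3, pmult K H.1 ≤ 22) :
    ∃ P : PSub (ZMod 5) 4 1, K P = 1 := by
  have h : pcard K ≠ 0 := by rw [hcard]; norm_num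
  rw [pcard, finsum_eq_sum_of_fintype] at h
  obtain ⟨P, _, hP⟩ := Finset.exists_ne_zero_of_sum_ne_zero h
  have h1 := point_le1 K hcard hle P.2
  rw [pmult_point] at h1
  exact ⟨P, by omega⟩

lemma sum_lines_in_plane {W : Submodule F5 V} (hW : finrank F5 W = 3) :
    ∑ L ∈ subTh 2 ⊥ W, pmult K L = 6 * pmult K W := by
  rw [sum_pmult_eq K W _ (fun U hU => (mem_subTh.mp hU).2.2)]
  have e : ∀ p ∈ subTh 1 ⊥ W,
      ((subTh 2 ⊥ W).filter (fun U => p ≤ U)).card * pmult K p = 6 * pmult K p := by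
    intro p hp
    rw [mem_subTh] at hp
    have : (subTh 2 ⊥ W).filter (fun U => p ≤ U) = subTh 2 p W := by
      ext L
      simp only [mem_filter, mem_subTh]
      exact ⟨fun h => ⟨h.1.1, h.2, h.1.2.2⟩, fun h => ⟨⟨h.1, bot_le, h.2.2⟩, h.2.1⟩⟩
    rw [this, card_linesThru_in hp.1 hW hp.2.2]
  rw [Finset.sum_congr rfl e, ← mul_sum, ← pmult_eq_sum]

lemma ex_line (hcard : pcard K = 104) (hle : ∀ H : PSub (ZMod 5) 4 3, pmult K H.1 ≤ 22)
    (hex : ∃ H0 : PSub (ZMod 5) 4 3, pmult K H0.1 = 22) :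
    ∃ L : PSub (ZMod 5) 4 2, pmult K L.1 = 5 := by
  obtain ⟨H0, hH0⟩ := hex
  have hsum := sum_lines_in_plane K H0.2
  rw [hH0] at hsum
  by_contra hno
  push_neg at hno
  have hb : ∀ L ∈ subTh 2 ⊥ H0.1, pmult K L ≤ 4 := by
    intro L hL
    have h1 := line_le5 K hcard hle (mem_subTh.mp hL).1
    have h2 := hno ⟨L, (mem_subTh.mp hL).1⟩
    simp only at h2
    omega
  have : ∑ L ∈ subTh 2 ⊥ H0.1, pmult K L ≤ 31 * 4 := by
    calc ∑ L ∈ subTh 2 ⊥ H0.1, pmult K L ≤ ∑ _L ∈ subTh 2 ⊥ H0.1, 4 := sum_le_sum hb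
      _ = 31 * 4 := by rw [sum_const, smul_eq_mul, card_lines_plane H0.2]
  omega

end Main

section PartC
variable (K : PSub F5 4 1 → ℕ)

/-- arc points (multiplicity-1 points) inside `W`. -/
noncomputable def arcA (W : Submodule F5 V) : Finset (Submodule F5 V) :=
  (subTh 1 ⊥ W).filter (fun p => pmult K p = 1)

lemma mem_arcA {W p : Submodule F5 V} :
    p ∈ arcA K W ↔ (finrank F5 p = 1 ∧ p ≤ W) ∧ pmult K p = 1 := by
  simp only [arcA, mem_filter, mem_subTh]
  exact ⟨fun h => ⟨⟨h.1.1, h.1.2.2⟩, h.2⟩, fun h => ⟨⟨h.1.1, bot_le, h.1.2⟩, h.2⟩⟩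

lemma pm_card (hK1 : ∀ p : Submodule F5 V, finrank F5 p = 1 → pmult K p ≤ 1)
    (S : Submodule F5 V) :
    pmult K S = ((subTh 1 ⊥ S).filter (fun p => pmult K p = 1)).card := by
  rw [pmult_eq_sum, ← sum_filter_add_sum_filter_not (subTh 1 ⊥ S) (fun p => pmult K p = 1)]
  have e1 : ∀ p ∈ (subTh 1 ⊥ S).filter (fun p => pmult K p = 1), pmult K p = 1 :=
    fun p hp => (mem_filter.mp hp).2
  have e2 : ∀ p ∈ (subTh 1 ⊥ S).filter (fun p => ¬ pmult K p = 1), pmult K p = 0 := by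
    intro p hp
    rw [mem_filter, mem_subTh] at hp
    have := hK1 p hp.1.1
    omega
  rw [Finset.sum_congr rfl e1, Finset.sum_eq_zero e2, sum_const, smul_eq_mul, mul_one, add_zero]

lemma card_arcA (hK1 : ∀ p : Submodule F5 V, finrank F5 p = 1 → pmult K p ≤ 1)
    (W : Submodule F5 V) : (arcA K W).card = pmult K W := (pm_card K hK1 W).symm

lemma pm_card_le (hK1 : ∀ p : Submodule F5 V, finrank F5 p = 1 → pmult K p ≤ 1)
    {L W : Submodule F5 V} (hLW : L ≤ W) :
    pmult K L = ((arcA K W).filter (fun p => p ≤ L)).card := by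
  rw [pm_card K hK1 L]
  congr 1
  ext p
  simp only [mem_filter, mem_subTh, mem_arcA]
  constructor
  · rintro ⟨⟨h1, _, h2⟩, h3⟩
    exact ⟨⟨⟨h1, h2.trans hLW⟩, h3⟩, h2⟩
  · rintro ⟨⟨⟨h1, _⟩, h3⟩, h2⟩
    exact ⟨⟨h1, bot_le, h2⟩, h3⟩

lemma incidence_count (hK1 : ∀ p : Submodule F5 V, finrank F5 p = 1 → pmult K p ≤ 1)
    {W : Submodule F5 V} (C : Finset (Submodule F5 V)) (hC : C ⊆ subTh 2 ⊥ W) :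
    ∑ L ∈ C, pmult K L = ∑ p ∈ arcA K W, (C.filter (fun L => p ≤ L)).card := by
  have e : ∀ L ∈ C, pmult K L = ((arcA K W).filter (fun p => p ≤ L)).card := by
    intro L hL
    exact pm_card_le K hK1 (mem_subTh.mp (hC hL)).2.2
  rw [Finset.sum_congr rfl e, ← swap_count (arcA K W) C (fun p L => p ≤ L)]

lemma arc_pencil {p W : Submodule F5 V} (hp : finrank F5 p = 1) (hW3 : finrank F5 W = 3)
    (hpW : p ≤ W) :
    ∑ L ∈ subTh 2 p W, pmult K L = pmult K W + 5 * pmult K p := by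
  have h0 := sum_thru K hp hpW (card_linesThru_in hp hW3 hpW)
  have h : ∑ L ∈ subTh 2 p W, pmult K L + pmult K p = pmult K W + 6 * pmult K p := h0
  omega

lemma lines_meet {W L1 L2 : Submodule F5 V} (hW : finrank F5 W = 3)
    (h1 : finrank F5 L1 = 2) (h2 : finrank F5 L2 = 2) (hL1 : L1 ≤ W) (hL2 : L2 ≤ W)
    (hne : L1 ≠ L2) : finrank F5 ↥(L1 ⊓ L2) = 1 := by
  have hsup := Submodule.finrank_sup_add_finrank_inf_eq L1 L2
  have hup : finrank F5 ↥(L1 ⊔ L2) ≤ 3 := by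
    rw [← hW]; exact Submodule.finrank_mono (sup_le hL1 hL2)
  have hlt : L1 < L1 ⊔ L2 := by
    refine lt_of_le_of_ne le_sup_left (fun he => hne ?_)
    have hle : L2 ≤ L1 := he ▸ le_sup_right
    exact (Submodule.eq_of_le_of_finrank_le hle (by omega)).symm
  have := Submodule.finrank_lt_finrank_of_lt hlt
  omega

lemma sup_points {p q : Submodule F5 V} (hp : finrank F5 p = 1) (hq : finrank F5 q = 1)
    (hne : p ≠ q) : finrank F5 ↥(p ⊔ q) = 2 := by
  have hqp : ¬ q ≤ p := fun h => hne (Submodule.eq_of_le_of_finrank_le h (by omega)).symm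
  rw [rank_sup_point hq hqp, hp]

lemma line_eq_sup {p q L : Submodule F5 V} (hp : finrank F5 p = 1) (hq : finrank F5 q = 1)
    (hne : p ≠ q) (hL : finrank F5 L = 2) (hpL : p ≤ L) (hqL : q ≤ L) : p ⊔ q = L :=
  Submodule.eq_of_le_of_finrank_le (sup_le hpL hqL) (by rw [hL, sup_points hp hq hne])

lemma pair_count (hK1 : ∀ p : Submodule F5 V, finrank F5 p = 1 → pmult K p ≤ 1)
    {W : Submodule F5 V} (hW : finrank F5 W = 3) :
    ∑ L ∈ subTh 2 ⊥ W, (pmult K L * pmult K L - pmult K L)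
      = pmult K W * pmult K W - pmult K W := by
  set A := arcA K W with hA
  have hmem : ∀ x ∈ A, (finrank F5 x = 1 ∧ x ≤ W) ∧ pmult K x = 1 :=
    fun x hx => (mem_arcA K).mp hx
  have key : A.offDiag.card
      = ∑ L ∈ subTh 2 ⊥ W, (A.offDiag.filter (fun pq => pq.1 ⊔ pq.2 = L)).card := by
    apply card_eq_sum_card_fiberwise
    intro pq hpq
    rw [Finset.mem_coe, mem_offDiag] at hpq
    obtain ⟨h1, h2, hne⟩ := hpq
    obtain ⟨⟨hr1, hw1⟩, _⟩ := hmem _ h1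
    obtain ⟨⟨hr2, hw2⟩, _⟩ := hmem _ h2
    exact mem_subTh.mpr ⟨sup_points hr1 hr2 hne, bot_le, sup_le hw1 hw2⟩
  have fib : ∀ L ∈ subTh 2 ⊥ W, (A.offDiag.filter (fun pq => pq.1 ⊔ pq.2 = L)).card
      = pmult K L * pmult K L - pmult K L := by
    intro L hL
    rw [mem_subTh] at hL
    have hfe : A.offDiag.filter (fun pq => pq.1 ⊔ pq.2 = L)
        = (A.filter (fun p => p ≤ L)).offDiag := by
      ext ⟨p, q⟩
      simp only [mem_filter, mem_offDiag]
      constructor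
      · rintro ⟨⟨hp, hq, hne⟩, rfl⟩
        exact ⟨⟨hp, le_sup_left⟩, ⟨hq, le_sup_right⟩, hne⟩
      · rintro ⟨⟨hp, hpL⟩, ⟨hq, hqL⟩, hne⟩
        exact ⟨⟨hp, hq, hne⟩,
          line_eq_sup (hmem _ hp).1.1 (hmem _ hq).1.1 hne hL.1 hpL hqL⟩
    rw [hfe, offDiag_card, ← pm_card_le K hK1 hL.2.2]
  rw [Finset.sum_congr rfl fib] at key
  rw [← key, offDiag_card, card_arcA K hK1]

lemma card_partition {α : Type*} (s : Finset α) (F : α → ℕ) {n : ℕ}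
    (hF : ∀ x ∈ s, F x < n) :
    s.card = ∑ v ∈ Finset.range n, (s.filter (fun x => F x = v)).card :=
  card_eq_sum_card_fiberwise (fun x hx => mem_range.mpr (hF x hx))

lemma sum_partition {α : Type*} (s : Finset α) (F : α → ℕ) (g : ℕ → ℕ) {n : ℕ}
    (hF : ∀ x ∈ s, F x < n) :
    ∑ x ∈ s, g (F x) = ∑ v ∈ Finset.range n, (s.filter (fun x => F x = v)).card * g v := by
  rw [← Finset.sum_fiberwise_of_maps_to (fun x hx => mem_range.mpr (hF x hx))
    (fun x => g (F x))]
  apply sum_congr rfl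
  intro v _
  have e : ∀ x ∈ s.filter (fun x => F x = v), g (F x) = g v := by
    intro x hx; rw [(mem_filter.mp hx).2]
  rw [Finset.sum_congr rfl e, sum_const, smul_eq_mul]

lemma ex_arc (hK1 : ∀ p : Submodule F5 V, finrank F5 p = 1 → pmult K p ≤ 1)
    {W : Submodule F5 V} (hm : 1 ≤ pmult K W) : ∃ p, p ∈ arcA K W := by
  have := card_arcA K hK1 W
  have hpos : 0 < (arcA K W).card := by omega
  obtain ⟨p, hp⟩ := Finset.card_pos.mp hpos
  exact ⟨p, hp⟩

lemma ex_ext (hK1 : ∀ p : Submodule F5 V, finrank F5 p = 1 → pmult K p ≤ 1)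
    {W : Submodule F5 V} (hW : finrank F5 W = 3) (hm : pmult K W < 31) :
    ∃ x : Submodule F5 V, (finrank F5 x = 1 ∧ x ≤ W) ∧ pmult K x = 0 := by
  by_contra hno
  push_neg at hno
  have hsub : subTh 1 ⊥ W ⊆ arcA K W := by
    intro x hx
    rw [mem_subTh] at hx
    have h1 := hno x ⟨hx.1, hx.2.2⟩
    have h2 := hK1 x hx.1
    exact (mem_arcA K).mpr ⟨⟨hx.1, hx.2.2⟩, by omega⟩
  have := Finset.card_le_card hsub
  rw [card_pts_plane hW, card_arcA K hK1] at this
  omega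

end PartC

section Cases
variable (K : PSub F5 4 1 → ℕ)

lemma pencil_line_facts {W p L : Submodule F5 V} (hpA : p ∈ arcA K W)
    (hL : L ∈ subTh 2 p W) : finrank F5 L = 2 ∧ L ≤ W ∧ 1 ≤ pmult K L := by
  obtain ⟨⟨hr, hw⟩, h1⟩ := (mem_arcA K).mp hpA
  rw [mem_subTh] at hL
  exact ⟨hL.1, hL.2.2, by
    have := pmult_mono K hL.2.1
    omega⟩

lemma arc_pencil_sum {W p : Submodule F5 V} (hW3 : finrank F5 W = 3) (hpA : p ∈ arcA K W) :
    ∑ L ∈ subTh 2 p W, pmult K L = pmult K W + 5 := by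
  obtain ⟨⟨hr, hw⟩, h1⟩ := (mem_arcA K).mp hpA
  rw [arc_pencil K hr hW3 hw, h1, mul_one]

lemma arc_pencil_card {W p : Submodule F5 V} (hW3 : finrank F5 W = 3) (hpA : p ∈ arcA K W) :
    (subTh 2 p W).card = 6 := by
  obtain ⟨⟨hr, hw⟩, _⟩ := (mem_arcA K).mp hpA
  exact card_linesThru_in hr hW3 hw

lemma case_generic_ub (hK1 : ∀ x : Submodule F5 V, finrank F5 x = 1 → pmult K x ≤ 1)
    {W : Submodule F5 V} (hW3 : finrank F5 W = 3) (t : ℕ)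
    (ht : ∀ L : Submodule F5 V, finrank F5 L = 2 → L ≤ W → pmult K L ≤ t)
    (hm1 : 1 ≤ pmult K W) : pmult K W + 5 ≤ 6 * t := by
  obtain ⟨p, hp⟩ := ex_arc K hK1 hm1
  have hsum := arc_pencil_sum K hW3 hp
  have hb := Finset.sum_le_card_nsmul (subTh 2 p W) (pmult K) t
    (fun L hL => ht L (pencil_line_facts K hp hL).1 (pencil_line_facts K hp hL).2.1)
  rw [arc_pencil_card K hW3 hp, smul_eq_mul] at hb
  have hg : (subTh 2 p W).sum (pmult K) = ∑ L ∈ subTh 2 p W, pmult K L := rfl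
  omega

lemma case_div (hK1 : ∀ x : Submodule F5 V, finrank F5 x = 1 → pmult K x ≤ 1)
    {W : Submodule F5 V} (hW3 : finrank F5 W = 3) (t : ℕ)
    (hub : ∀ L : Submodule F5 V, finrank F5 L = 2 → L ≤ W → pmult K L ≤ t)
    (hm : pmult K W + 5 = 6 * t) (hmlt : pmult K W < 31)
    (hdvd : ¬ t ∣ pmult K W) : False := by
  have hall : ∀ L : Submodule F5 V, finrank F5 L = 2 → L ≤ W → pmult K L ≠ 0 →
      pmult K L = t := by
    intro L hL2 hLW hL0
    have hcardL := pm_card K hK1 L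
    have hpos : 0 < ((subTh 1 ⊥ L).filter (fun x => pmult K x = 1)).card := by omega
    obtain ⟨p, hp⟩ := card_pos.mp hpos
    rw [mem_filter, mem_subTh] at hp
    have hpW : p ≤ W := hp.1.2.2.trans hLW
    have hpA : p ∈ arcA K W := (mem_arcA K).mpr ⟨⟨hp.1.1, hpW⟩, hp.2⟩
    have hsum := arc_pencil_sum K hW3 hpA
    have hLmem : L ∈ subTh 2 p W := mem_subTh.mpr ⟨hL2, hp.1.2.2, hLW⟩
    by_contra hne
    rw [← Finset.add_sum_erase _ _ hLmem] at hsum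
    have hrest : ∑ L' ∈ (subTh 2 p W).erase L, pmult K L' ≤ 5 * t := by
      have hcarde : ((subTh 2 p W).erase L).card = 5 := by
        rw [card_erase_of_mem hLmem, arc_pencil_card K hW3 hpA]
      have hb := Finset.sum_le_card_nsmul ((subTh 2 p W).erase L) (pmult K) t
        (fun L' hL' => hub L' (mem_subTh.mp (mem_of_mem_erase hL')).1
          (mem_subTh.mp (mem_of_mem_erase hL')).2.2)
      rw [hcarde, smul_eq_mul] at hb
      exact hb
    have hflt := hub L hL2 hLW
    omega
  obtain ⟨x, ⟨hx1, hxW⟩, hx0⟩ := ex_ext K hK1 hW3 hmlt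
  have hsum : ∑ L ∈ subTh 2 x W, pmult K L = pmult K W := by
    rw [arc_pencil K hx1 hW3 hxW, hx0]
    omega
  have hdv : t ∣ ∑ L ∈ subTh 2 x W, pmult K L := by
    apply Finset.dvd_sum
    intro L hL
    rw [mem_subTh] at hL
    rcases eq_or_ne (pmult K L) 0 with h0 | h0
    · rw [h0]
      exact dvd_zero t
    · rw [hall L hL.1 hL.2.2 h0]
  rw [hsum] at hdv
  exact hdvd hdv

lemma pencil_counts (hK1 : ∀ x : Submodule F5 V, finrank F5 x = 1 → pmult K x ≤ 1)
    {W : Submodule F5 V} (hW3 : finrank F5 W = 3) {p : Submodule F5 V}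
    (hpA : p ∈ arcA K W) (t : ℕ)
    (hub : ∀ L : Submodule F5 V, finrank F5 L = 2 → L ≤ W → pmult K L ≤ t) :
    ∃ c d S',
      ((subTh 2 p W).filter (fun L => pmult K L = t)).card = c ∧
      ((subTh 2 p W).filter (fun L => ¬ pmult K L = t)).card = d ∧
      (∑ L ∈ (subTh 2 p W).filter (fun L => ¬ pmult K L = t), pmult K L) = S' ∧
      c + d = 6 ∧ c * t + S' = pmult K W + 5 ∧ d ≤ S' ∧ S' ≤ d * (t - 1) := by
  set Pp := subTh 2 p W with hPp
  refine ⟨_, _, _, rfl, rfl, rfl, ?_, ?_, ?_, ?_⟩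
  · rw [card_filter_add_card_filter_not, arc_pencil_card K hW3 hpA]
  · have hsplit := sum_filter_add_sum_filter_not Pp (fun L => pmult K L = t) (pmult K)
    have e : ∀ L ∈ Pp.filter (fun L => pmult K L = t), pmult K L = t :=
      fun L hL => (mem_filter.mp hL).2
    rw [Finset.sum_congr rfl e, sum_const, smul_eq_mul] at hsplit
    exact hsplit.trans (arc_pencil_sum K hW3 hpA)
  · have hb := Finset.card_nsmul_le_sum (Pp.filter (fun L => ¬ pmult K L = t)) (pmult K) 1
      (fun L hL => (pencil_line_facts K hpA (mem_filter.mp hL).1).2.2)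
    rw [smul_eq_mul, mul_one] at hb
    exact hb
  · apply Finset.sum_le_card_nsmul
    intro L hL
    rw [mem_filter] at hL
    have h1 := hub L (pencil_line_facts K hpA hL.1).1 (pencil_line_facts K hpA hL.1).2.1
    have h2 := hL.2
    omega

end Cases

section Cases2
variable (K : PSub F5 4 1 → ℕ)

lemma filter_pencil_eq {W p : Submodule F5 V} (hpA : p ∈ arcA K W)
    (v : ℕ) :
    ((subTh 2 ⊥ W).filter (fun L => pmult K L = v)).filter (fun L => p ≤ L)
      = (subTh 2 p W).filter (fun L => pmult K L = v) := by
  ext L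
  simp only [mem_filter, mem_subTh]
  constructor
  · rintro ⟨⟨⟨h2, _, hLW⟩, hq⟩, hpL⟩
    exact ⟨⟨h2, hpL, hLW⟩, hq⟩
  · rintro ⟨⟨h2, hpL, hLW⟩, hq⟩
    exact ⟨⟨⟨h2, bot_le, hLW⟩, hq⟩, hpL⟩

lemma global_count (hK1 : ∀ x : Submodule F5 V, finrank F5 x = 1 → pmult K x ≤ 1)
    {W : Submodule F5 V} (v cnt : ℕ)
    (hcv : ∀ p ∈ arcA K W, ((subTh 2 p W).filter (fun L => pmult K L = v)).card = cnt) :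
    ((subTh 2 ⊥ W).filter (fun L => pmult K L = v)).card * v = pmult K W * cnt := by
  have hinc := incidence_count K hK1 ((subTh 2 ⊥ W).filter (fun L => pmult K L = v))
    (filter_subset _ _)
  have e1 : ∀ L ∈ (subTh 2 ⊥ W).filter (fun L => pmult K L = v), pmult K L = v :=
    fun L hL => (mem_filter.mp hL).2
  rw [Finset.sum_congr rfl e1, sum_const, smul_eq_mul] at hinc
  have e2 : ∀ p ∈ arcA K W,
      (((subTh 2 ⊥ W).filter (fun L => pmult K L = v)).filter (fun L => p ≤ L)).card
        = cnt := by
    intro p hp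
    rw [filter_pencil_eq K hp]
    exact hcv p hp
  rw [Finset.sum_congr rfl e2, sum_const, smul_eq_mul, card_arcA K hK1] at hinc
  exact hinc

lemma case18 (hK1 : ∀ x : Submodule F5 V, finrank F5 x = 1 → pmult K x ≤ 1)
    {W : Submodule F5 V} (hW3 : finrank F5 W = 3) (hm : pmult K W = 18)
    (hub : ∀ L : Submodule F5 V, finrank F5 L = 2 → L ≤ W → pmult K L ≤ 4) : False := by
  have hcnt : ∀ p ∈ arcA K W, ((subTh 2 p W).filter (fun L => pmult K L = 4)).card = 5 := by
    intro p hp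
    obtain ⟨c, d, S', hc, hd, hS', h6, hsum, hlb, hub'⟩ := pencil_counts K hK1 hW3 hp 4 hub
    rw [hm] at hsum
    omega
  have h := global_count K hK1 4 5 hcnt
  rw [hm] at h
  omega

end Cases2

section Cases3
variable (K : PSub F5 4 1 → ℕ)

lemma case12 (hK1 : ∀ x : Submodule F5 V, finrank F5 x = 1 → pmult K x ≤ 1)
    {W : Submodule F5 V} (hW3 : finrank F5 W = 3) (hm : pmult K W = 12)
    (hub : ∀ L : Submodule F5 V, finrank F5 L = 2 → L ≤ W → pmult K L ≤ 3) : False := by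
  -- per-arc-point line type counts
  have hcnt : ∀ p ∈ arcA K W,
      ((subTh 2 p W).filter (fun L => pmult K L = 3)).card = 5 ∧
      ((subTh 2 p W).filter (fun L => pmult K L = 2)).card = 1 ∧
      ((subTh 2 p W).filter (fun L => pmult K L = 1)).card = 0 := by
    intro p hp
    obtain ⟨c, d, S', hc, hd, hS', h6, hsum, hlb, hub'⟩ := pencil_counts K hK1 hW3 hp 3 hub
    rw [hm] at hsum
    have hc5 : c = 5 := by omega
    have hd1 : d = 1 := by omega
    have hS2 : S' = 2 := by omega
    have hd' : ((subTh 2 p W).filter (fun L => ¬ pmult K L = 3)).card = 1 := by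
      rw [hd]; exact hd1
    obtain ⟨L0, hL0⟩ := Finset.card_eq_one.mp hd'
    have hL0mem : L0 ∈ (subTh 2 p W).filter (fun L => ¬ pmult K L = 3) := by
      rw [hL0]; exact mem_singleton_self L0
    have hsum0 : pmult K L0 = 2 := by
      have := hS'
      rw [hL0, sum_singleton] at this
      omega
    rw [mem_filter] at hL0mem
    refine ⟨by rw [hc]; exact hc5, ?_, ?_⟩
    · have he : (subTh 2 p W).filter (fun L => pmult K L = 2) = {L0} := by
        ext L
        rw [mem_filter, mem_singleton]
        constructor
        · rintro ⟨hLP, hL2⟩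
          have : L ∈ (subTh 2 p W).filter (fun L => ¬ pmult K L = 3) :=
            mem_filter.mpr ⟨hLP, by omega⟩
          rw [hL0, mem_singleton] at this
          exact this
        · rintro rfl
          exact ⟨hL0mem.1, hsum0⟩
      rw [he, card_singleton]
    · rw [Finset.card_eq_zero]
      apply Finset.eq_empty_of_forall_notMem
      intro L hL
      rw [mem_filter] at hL
      have : L ∈ (subTh 2 p W).filter (fun L => ¬ pmult K L = 3) :=
        mem_filter.mpr ⟨hL.1, by omega⟩
      rw [hL0, mem_singleton] at this
      rw [this] at hL
      omega
  -- global line-type counts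
  have h3 := global_count K hK1 3 5 (fun p hp => (hcnt p hp).1)
  have h2 := global_count K hK1 2 1 (fun p hp => (hcnt p hp).2.1)
  have h1 := global_count K hK1 1 0 (fun p hp => (hcnt p hp).2.2)
  rw [hm] at h3 h2 h1
  -- partition of the 31 lines by multiplicity
  have hpart := card_partition (subTh 2 ⊥ W) (pmult K) (n := 4)
    (fun L hL => by
      have := hub L (mem_subTh.mp hL).1 (mem_subTh.mp hL).2.2
      omega)
  rw [card_lines_plane hW3, Finset.sum_range_succ, Finset.sum_range_succ,
    Finset.sum_range_succ, Finset.sum_range_succ, Finset.sum_range_zero] at hpart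
  have b3 : ((subTh 2 ⊥ W).filter (fun L => pmult K L = 3)).card * 3 = 12 * 5 := h3
  have b2 : ((subTh 2 ⊥ W).filter (fun L => pmult K L = 2)).card * 2 = 12 * 1 := h2
  have b1 : ((subTh 2 ⊥ W).filter (fun L => pmult K L = 1)).card * 1 = 12 * 0 := h1
  have bp : (31:ℕ) = 0 + ((subTh 2 ⊥ W).filter (fun L => pmult K L = 0)).card
      + ((subTh 2 ⊥ W).filter (fun L => pmult K L = 1)).card
      + ((subTh 2 ⊥ W).filter (fun L => pmult K L = 2)).card
      + ((subTh 2 ⊥ W).filter (fun L => pmult K L = 3)).card := hpart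
  have hZcard : ((subTh 2 ⊥ W).filter (fun L => pmult K L = 0)).card = 5 := by omega
  -- external points
  have hppart := card_partition (subTh 1 ⊥ W) (pmult K) (n := 2)
    (fun x hx => by
      have := hK1 x (mem_subTh.mp hx).1
      omega)
  rw [card_pts_plane hW3, Finset.sum_range_succ, Finset.sum_range_succ,
    Finset.sum_range_zero] at hppart
  have bq : (31:ℕ) = 0 + ((subTh 1 ⊥ W).filter (fun x => pmult K x = 0)).card
      + ((subTh 1 ⊥ W).filter (fun x => pmult K x = 1)).card := hppart
  have bA : ((subTh 1 ⊥ W).filter (fun x => pmult K x = 1)).card = 12 := by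
    have := card_arcA K hK1 W
    rw [hm] at this
    exact this
  have hEcard : ((subTh 1 ⊥ W).filter (fun x => pmult K x = 0)).card = 19 := by omega
  set Z := (subTh 2 ⊥ W).filter (fun L => pmult K L = 0) with hZ
  set E := (subTh 1 ⊥ W).filter (fun x => pmult K x = 0) with hE
  -- total incidences between E and Z
  have hswap := swap_count E Z (fun x L => x ≤ L)
  have hper : ∀ L ∈ Z, (E.filter (fun x => x ≤ L)).card = 6 := by
    intro L hL
    rw [hZ, mem_filter, mem_subTh] at hL
    have he : E.filter (fun x => x ≤ L) = subTh 1 ⊥ L := by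
      ext x
      rw [hE, mem_filter, mem_filter, mem_subTh, mem_subTh]
      constructor
      · rintro ⟨⟨⟨h1', _, _⟩, _⟩, hxL⟩
        exact ⟨h1', bot_le, hxL⟩
      · rintro ⟨h1', _, hxL⟩
        have hx0 : pmult K x ≤ 0 := by
          have := pmult_mono K hxL
          omega
        exact ⟨⟨⟨h1', bot_le, hxL.trans hL.1.2.2⟩, by omega⟩, hxL⟩
    rw [he, card_pts_line hL.1.1]
  rw [Finset.sum_congr rfl hper, sum_const, smul_eq_mul, hZcard] at hswap
  -- each external point is on at most 2 lines of Z
  have hc2 : ∀ x ∈ E, (Z.filter (fun L => x ≤ L)).card ≤ 2 := by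
    intro x hx
    rw [hE, mem_filter, mem_subTh] at hx
    by_contra hgt
    push_neg at hgt
    have hPx : Z.filter (fun L => x ≤ L) ⊆ subTh 2 x W := by
      intro L hL
      rw [mem_filter, hZ, mem_filter, mem_subTh] at hL
      exact mem_subTh.mpr ⟨hL.1.1.1, hL.2, hL.1.1.2.2⟩
    have hsumx : ∑ L ∈ subTh 2 x W, pmult K L = 12 := by
      rw [arc_pencil K hx.1.1 hW3 hx.1.2.2, hx.2, hm]
    have hsplit : ∑ L ∈ subTh 2 x W \ Z.filter (fun L => x ≤ L), pmult K L
        + ∑ L ∈ Z.filter (fun L => x ≤ L), pmult K L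
        = ∑ L ∈ subTh 2 x W, pmult K L := Finset.sum_sdiff hPx
    have hz0 : ∑ L ∈ Z.filter (fun L => x ≤ L), pmult K L = 0 := by
      apply Finset.sum_eq_zero
      intro L hL
      rw [mem_filter, hZ, mem_filter] at hL
      exact hL.1.2
    have hbd0 := Finset.sum_le_card_nsmul (subTh 2 x W \ Z.filter (fun L => x ≤ L))
      (pmult K) 3 (fun L hL => by
        have hLm := mem_subTh.mp (mem_sdiff.mp hL).1
        exact hub L hLm.1 hLm.2.2)
    have hbd : ∑ L ∈ subTh 2 x W \ Z.filter (fun L => x ≤ L), pmult K L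
        ≤ (subTh 2 x W \ Z.filter (fun L => x ≤ L)).card * 3 := by
      rw [← smul_eq_mul]
      exact hbd0
    have hcs : (subTh 2 x W \ Z.filter (fun L => x ≤ L)).card
        = 6 - (Z.filter (fun L => x ≤ L)).card := by
      rw [card_sdiff_of_subset hPx, card_linesThru_in hx.1.1 hW3 hx.1.2.2]
    have hle6 : (Z.filter (fun L => x ≤ L)).card ≤ 6 := by
      have := Finset.card_le_card hPx
      rw [card_linesThru_in hx.1.1 hW3 hx.1.2.2] at this
      exact this
    omega
  -- at least 11 external points on exactly 2 lines of Z
  have hsplit2 : ∑ x ∈ E.filter (fun x => (Z.filter (fun L => x ≤ L)).card = 2),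
        (Z.filter (fun L => x ≤ L)).card
      + ∑ x ∈ E.filter (fun x => ¬ (Z.filter (fun L => x ≤ L)).card = 2),
        (Z.filter (fun L => x ≤ L)).card
      = ∑ x ∈ E, (Z.filter (fun L => x ≤ L)).card :=
    sum_filter_add_sum_filter_not E _ _
  have hA2 : ∑ x ∈ E.filter (fun x => (Z.filter (fun L => x ≤ L)).card = 2),
        (Z.filter (fun L => x ≤ L)).card
      = (E.filter (fun x => (Z.filter (fun L => x ≤ L)).card = 2)).card * 2 := by
    rw [Finset.sum_congr rfl (fun x hx => (mem_filter.mp hx).2), sum_const, smul_eq_mul]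
  have hB2 : ∑ x ∈ E.filter (fun x => ¬ (Z.filter (fun L => x ≤ L)).card = 2),
        (Z.filter (fun L => x ≤ L)).card
      ≤ (E.filter (fun x => ¬ (Z.filter (fun L => x ≤ L)).card = 2)).card * 1 := by
    rw [← smul_eq_mul]
    apply Finset.sum_le_card_nsmul
    intro x hx
    rw [mem_filter] at hx
    have := hc2 x hx.1
    have h2' := hx.2
    omega
  have hC2 : (E.filter (fun x => (Z.filter (fun L => x ≤ L)).card = 2)).card
      + (E.filter (fun x => ¬ (Z.filter (fun L => x ≤ L)).card = 2)).card = 19 := by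
    rw [card_filter_add_card_filter_not, hE]
    exact hEcard
  have hbridge : ∑ x ∈ E, (Z.filter (fun L => x ≤ L)).card = 30 := by omega
  have hk2card : 11 ≤ (E.filter (fun x => (Z.filter (fun L => x ≤ L)).card = 2)).card := by
    omega
  -- injection into 2-subsets of Z
  have hinj := Finset.card_le_card_of_injOn
    (f := fun x => Z.filter (fun L => x ≤ L))
    (s := E.filter (fun x => (Z.filter (fun L => x ≤ L)).card = 2))
    (t := Z.powersetCard 2)
    (fun x hx => by
      rw [Finset.mem_coe, mem_powersetCard]
      exact ⟨filter_subset _ _, (mem_filter.mp (Finset.mem_coe.mp hx)).2⟩)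
    (by
      intro x hx y hy hxy
      simp only [Finset.coe_filter, Set.mem_setOf_eq] at hx hy
      by_contra hne
      obtain ⟨L1, L2, hL12, hs⟩ := Finset.card_eq_two.mp hx.2
      simp only at hxy
      have hxmem := hx.1
      rw [hE, mem_filter, mem_subTh] at hxmem
      have hymem := hy.1
      rw [hE, mem_filter, mem_subTh] at hymem
      have hL1x : L1 ∈ Z.filter (fun L => x ≤ L) := by rw [hs]; simp
      have hL2x : L2 ∈ Z.filter (fun L => x ≤ L) := by rw [hs]; simp
      have hL1y : L1 ∈ Z.filter (fun L => y ≤ L) := by rw [← hxy, hs]; simp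
      have hL2y : L2 ∈ Z.filter (fun L => y ≤ L) := by rw [← hxy, hs]; simp
      have hL1r : finrank F5 L1 = 2 := by
        have := (mem_filter.mp hL1x).1
        rw [hZ, mem_filter, mem_subTh] at this
        exact this.1.1
      have hL2r : finrank F5 L2 = 2 := by
        have := (mem_filter.mp hL2x).1
        rw [hZ, mem_filter, mem_subTh] at this
        exact this.1.1
      have he1 : x ⊔ y = L1 := line_eq_sup hxmem.1.1 hymem.1.1 hne hL1r
        (mem_filter.mp hL1x).2 (mem_filter.mp hL1y).2
      have he2 : x ⊔ y = L2 := line_eq_sup hxmem.1.1 hymem.1.1 hne hL2r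
        (mem_filter.mp hL2x).2 (mem_filter.mp hL2y).2
      exact hL12 (he1 ▸ he2))
  rw [card_powersetCard, hZcard] at hinj
  have hch : Nat.choose 5 2 = 10 := by decide
  omega

end Cases3

section Cases4
variable (K : PSub F5 4 1 → ℕ)

lemma case17 (hK1 : ∀ x : Submodule F5 V, finrank F5 x = 1 → pmult K x ≤ 1)
    {W : Submodule F5 V} (hW3 : finrank F5 W = 3) (hm : pmult K W = 17)
    (hub : ∀ L : Submodule F5 V, finrank F5 L = 2 → L ≤ W → pmult K L ≤ 4) : False := by
  have hlt5 : ∀ L ∈ subTh 2 ⊥ W, pmult K L < 5 := fun L hL => by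
    have := hub L (mem_subTh.mp hL).1 (mem_subTh.mp hL).2.2
    omega
  -- no 1-lines
  have hcnt1 : ∀ p ∈ arcA K W, ((subTh 2 p W).filter (fun L => pmult K L = 1)).card = 0 := by
    intro p hp
    rw [Finset.card_eq_zero]
    apply Finset.eq_empty_of_forall_notMem
    intro L hL
    rw [mem_filter] at hL
    have hsum := arc_pencil_sum K hW3 hp
    rw [hm] at hsum
    rw [← Finset.add_sum_erase _ _ hL.1] at hsum
    have hrest : ∑ L' ∈ (subTh 2 p W).erase L, pmult K L' ≤ 5 * 4 := by
      have hcarde : ((subTh 2 p W).erase L).card = 5 := by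
        rw [card_erase_of_mem hL.1, arc_pencil_card K hW3 hp]
      have hb := Finset.sum_le_card_nsmul ((subTh 2 p W).erase L) (pmult K) 4
        (fun L' hL' => hub L' (mem_subTh.mp (mem_of_mem_erase hL')).1
          (mem_subTh.mp (mem_of_mem_erase hL')).2.2)
      rw [hcarde, smul_eq_mul] at hb
      exact hb
    have hbr : pmult K L + ∑ L' ∈ (subTh 2 p W).erase L, pmult K L' = 22 := hsum
    have hv : pmult K L = 1 := hL.2
    omega
  have h1 := global_count K hK1 1 0 hcnt1
  rw [hm] at h1
  have b1 : ((subTh 2 ⊥ W).filter (fun L => pmult K L = 1)).card * 1 = 17 * 0 := h1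
  -- partition of 31 lines
  have hpart := card_partition (subTh 2 ⊥ W) (pmult K) (n := 5) hlt5
  rw [card_lines_plane hW3, Finset.sum_range_succ, Finset.sum_range_succ,
    Finset.sum_range_succ, Finset.sum_range_succ, Finset.sum_range_succ,
    Finset.sum_range_zero] at hpart
  have bp : (31:ℕ) = 0 + ((subTh 2 ⊥ W).filter (fun L => pmult K L = 0)).card
      + ((subTh 2 ⊥ W).filter (fun L => pmult K L = 1)).card
      + ((subTh 2 ⊥ W).filter (fun L => pmult K L = 2)).card
      + ((subTh 2 ⊥ W).filter (fun L => pmult K L = 3)).card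
      + ((subTh 2 ⊥ W).filter (fun L => pmult K L = 4)).card := hpart
  -- sum of multiplicities = 102
  have hsumf : ∑ L ∈ subTh 2 ⊥ W, pmult K L = 102 := by
    rw [sum_lines_in_plane K hW3, hm]
  have hs1 := sum_partition (subTh 2 ⊥ W) (pmult K) (fun v => v) (n := 5) hlt5
  rw [Finset.sum_range_succ, Finset.sum_range_succ, Finset.sum_range_succ,
    Finset.sum_range_succ, Finset.sum_range_succ, Finset.sum_range_zero] at hs1
  have bs1 : ∑ L ∈ subTh 2 ⊥ W, pmult K L
      = 0 + ((subTh 2 ⊥ W).filter (fun L => pmult K L = 0)).card * 0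
      + ((subTh 2 ⊥ W).filter (fun L => pmult K L = 1)).card * 1
      + ((subTh 2 ⊥ W).filter (fun L => pmult K L = 2)).card * 2
      + ((subTh 2 ⊥ W).filter (fun L => pmult K L = 3)).card * 3
      + ((subTh 2 ⊥ W).filter (fun L => pmult K L = 4)).card * 4 := hs1
  -- pair count = 17*17-17
  have hs2base := pair_count K hK1 hW3
  rw [hm] at hs2base
  have hs2 := sum_partition (subTh 2 ⊥ W) (pmult K) (fun v => v * v - v) (n := 5) hlt5
  rw [Finset.sum_range_succ, Finset.sum_range_succ, Finset.sum_range_succ,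
    Finset.sum_range_succ, Finset.sum_range_succ, Finset.sum_range_zero] at hs2
  have bs2 : ∑ L ∈ subTh 2 ⊥ W, (pmult K L * pmult K L - pmult K L)
      = 0 + ((subTh 2 ⊥ W).filter (fun L => pmult K L = 0)).card * 0
      + ((subTh 2 ⊥ W).filter (fun L => pmult K L = 1)).card * 0
      + ((subTh 2 ⊥ W).filter (fun L => pmult K L = 2)).card * 2
      + ((subTh 2 ⊥ W).filter (fun L => pmult K L = 3)).card * 6
      + ((subTh 2 ⊥ W).filter (fun L => pmult K L = 4)).card * 12 := hs2
  have bs2' : ∑ L ∈ subTh 2 ⊥ W, (pmult K L * pmult K L - pmult K L)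
      = 17 * 17 - 17 := hs2base
  -- solve for the number of 0-lines
  have hn0 : ((subTh 2 ⊥ W).filter (fun L => pmult K L = 0)).card = 2 := by omega
  obtain ⟨L1, L2, hL12, hZeq⟩ := Finset.card_eq_two.mp hn0
  have hL1m : L1 ∈ (subTh 2 ⊥ W).filter (fun L => pmult K L = 0) := by rw [hZeq]; simp
  have hL2m : L2 ∈ (subTh 2 ⊥ W).filter (fun L => pmult K L = 0) := by rw [hZeq]; simp
  rw [mem_filter, mem_subTh] at hL1m hL2m
  -- the intersection point
  have hq : finrank F5 ↥(L1 ⊓ L2) = 1 :=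
    lines_meet hW3 hL1m.1.1 hL2m.1.1 hL1m.1.2.2 hL2m.1.2.2 hL12
  have hqW : L1 ⊓ L2 ≤ W := inf_le_left.trans hL1m.1.2.2
  have hq0 : pmult K (L1 ⊓ L2) = 0 := by
    have := pmult_mono K (inf_le_left : L1 ⊓ L2 ≤ L1)
    rw [hL1m.2] at this
    omega
  have hsumq : ∑ L ∈ subTh 2 (L1 ⊓ L2) W, pmult K L = 17 := by
    rw [arc_pencil K hq hW3 hqW, hq0, hm]
  have hD : ({L1, L2} : Finset (Submodule F5 V)) ⊆ subTh 2 (L1 ⊓ L2) W := by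
    intro L hL
    rw [mem_insert, mem_singleton] at hL
    rcases hL with rfl | rfl
    · exact mem_subTh.mpr ⟨hL1m.1.1, inf_le_left, hL1m.1.2.2⟩
    · exact mem_subTh.mpr ⟨hL2m.1.1, inf_le_right, hL2m.1.2.2⟩
  have hsplit : ∑ L ∈ subTh 2 (L1 ⊓ L2) W \ ({L1, L2} : Finset (Submodule F5 V)), pmult K L
      + ∑ L ∈ ({L1, L2} : Finset (Submodule F5 V)), pmult K L
      = ∑ L ∈ subTh 2 (L1 ⊓ L2) W, pmult K L := Finset.sum_sdiff hD
  have hDsum : ∑ L ∈ ({L1, L2} : Finset (Submodule F5 V)), pmult K L = 0 := by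
    rw [Finset.sum_insert (by simp [hL12]), Finset.sum_singleton, hL1m.2, hL2m.2]
  have hDcard : ({L1, L2} : Finset (Submodule F5 V)).card = 2 := by
    rw [Finset.card_insert_of_notMem (by simp [hL12]), Finset.card_singleton]
  have hbd : ∑ L ∈ subTh 2 (L1 ⊓ L2) W \ ({L1, L2} : Finset (Submodule F5 V)), pmult K L
      ≤ (subTh 2 (L1 ⊓ L2) W \ ({L1, L2} : Finset (Submodule F5 V))).card * 4 := by
    rw [← smul_eq_mul]
    apply Finset.sum_le_card_nsmul
    intro L hL
    have hLm := mem_subTh.mp (mem_sdiff.mp hL).1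
    exact hub L hLm.1 hLm.2.2
  have hcs : (subTh 2 (L1 ⊓ L2) W \ ({L1, L2} : Finset (Submodule F5 V))).card = 4 := by
    rw [card_sdiff_of_subset hD, hDcard, card_linesThru_in hq hW3 hqW]
  omega

end Cases4

end PG

/-- Basic structure of a `(104,22)`-arc `K` in `PG(3,5)`:
(a) the maximal multiplicity of a line in an `m`-plane is `⌊(6+m)/5⌋`;
(b) `γ₁ = 1`, `γ₂ = 5`, `γ₃ = 22`;
(c) there are no planes of multiplicity `2, 3, 7, 8, 12, 13, 17, 18`. -/

theorem stmt16 (K : PSub (ZMod 5) 4 1 → ℕ)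
    (hcard : pcard K = 104)
    (hle : ∀ H : PSub (ZMod 5) 4 3, pmult K H.1 ≤ 22)
    (hex : ∃ H0 : PSub (ZMod 5) 4 3, pmult K H0.1 = 22) :
    (∀ H : PSub (ZMod 5) 4 3, ∀ L : PSub (ZMod 5) 4 2, L.1 ≤ H.1 →
      5 * pmult K L.1 ≤ 6 + pmult K H.1) ∧
    ((∀ P : PSub (ZMod 5) 4 1, K P ≤ 1) ∧
      (∀ L : PSub (ZMod 5) 4 2, pmult K L.1 ≤ 5) ∧
      (∃ P : PSub (ZMod 5) 4 1, K P = 1) ∧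
      (∃ L : PSub (ZMod 5) 4 2, pmult K L.1 = 5)) ∧
    (∀ H : PSub (ZMod 5) 4 3,
      pmult K H.1 ∉ ({2, 3, 7, 8, 12, 13, 17, 18} : Set ℕ)) := by
  have hK1 : ∀ x : Submodule PG.F5 PG.V, Module.finrank PG.F5 x = 1 → pmult K x ≤ 1 :=
    fun x hx => PG.point_le1 K hcard hle hx
  refine ⟨?_, ⟨?_, ?_, ?_, ?_⟩, ?_⟩
  · intro H L hLH
    exact PG.parta K hcard hle H.2 L.2 hLH
  · intro P
    have h := PG.point_le1 K hcard hle P.2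
    rw [PG.pmult_point] at h
    exact h
  · intro L
    exact PG.line_le5 K hcard hle L.2
  · exact PG.ex_point K hcard hle
  · exact PG.ex_line K hcard hle hex
  · intro H hmem
    simp only [Set.mem_insert_iff, Set.mem_singleton_iff] at hmem
    have hline : ∀ L : Submodule PG.F5 PG.V, Module.finrank PG.F5 L = 2 → L ≤ H.1 →
        5 * pmult K L ≤ 6 + pmult K H.1 :=
      fun L h2 hLe => PG.parta K hcard hle H.2 h2 hLe
    rcases hmem with h|h|h|h|h|h|h|h
    · exact absurd (PG.case_generic_ub K hK1 H.2 1
        (fun L h2 hLe => by have := hline L h2 hLe; omega) (by omega)) (by omega)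
    · exact absurd (PG.case_generic_ub K hK1 H.2 1
        (fun L h2 hLe => by have := hline L h2 hLe; omega) (by omega)) (by omega)
    · exact PG.case_div K hK1 H.2 2
        (fun L h2 hLe => by have := hline L h2 hLe; omega) (by omega) (by omega)
        (by rw [h]; decide)
    · exact absurd (PG.case_generic_ub K hK1 H.2 2
        (fun L h2 hLe => by have := hline L h2 hLe; omega) (by omega)) (by omega)
    · exact PG.case12 K hK1 H.2 h
        (fun L h2 hLe => by have := hline L h2 hLe; omega)
    · exact PG.case_div K hK1 H.2 3
        (fun L h2 hLe => by have := hline L h2 hLe; omega) (by omega) (by omega)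
        (by rw [h]; decide)
    · exact PG.case17 K hK1 H.2 h
        (fun L h2 hLe => by have := hline L h2 hLe; omega)
    · exact PG.case18 K hK1 H.2 h
        (fun L h2 hLe => by have := hline L h2 hLe; omega)
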